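/- Let F be the Feynman–Kac operator associated with the path measures (μ_x), the rate function c and the initial function g, and suppose T₀ ∈ (0,T] satisfies ‖g‖ · Lip(c) · T₀ · e^{c₀T₀} < 1. Then there exists a unique bounded measurable function u : [0,T₀]×E → ℝ satisfying the integral equation u(t,x) = F[u](t,x) for all (t,x) ∈ [0,T₀]×E; moreover this solution satisfies |u(t,x)| ≤ ‖g‖ e^{c₀T₀} for all (t,x). -/

import Mathlib

set_option linter.unusedSectionVars false
set_option maxHeartbeats 1000000
open MeasureTheory ProbabilityTheory Function
open MeasureTheory Set Filter

/-- The Feynman–Kac operator `F[v](t,x) = ∫ exp(∫₀ᵗ c(v(t−s, ω(s))) ds) · g(ω(t)) dμ_x(ω)`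
on the space of continuous paths `ω : [0,T] → E`. -/
noncomputable def FeynmanKac {E : Type*} [TopologicalSpace E] [MeasurableSpace E]
    {T : ℝ} (hT : 0 ≤ T) [MeasurableSpace C(Set.Icc (0:ℝ) T, E)]
    (μ : E → Measure C(Set.Icc (0:ℝ) T, E))
    (c : ℝ → ℝ) (g : E → ℝ) (v : ℝ → E → ℝ) (t : ℝ) (x : E) : ℝ :=
  ∫ ω, Real.exp (∫ s in (0:ℝ)..t, c (v (t - s) (ω (Set.projIcc 0 T hT s))))
      * g (ω (Set.projIcc 0 T hT t)) ∂(μ x)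

noncomputable section
variable {E : Type*} [MetricSpace E] [PolishSpace E] [MeasurableSpace E] [BorelSpace E]
  {T : ℝ} (hT : 0 ≤ T)
  [MeasurableSpace C(Set.Icc (0:ℝ) T, E)] [BorelSpace C(Set.Icc (0:ℝ) T, E)]

def fkInner (c : ℝ → ℝ) (v : ℝ → E → ℝ) (t : ℝ) (ω : C(Set.Icc (0:ℝ) T, E)) : ℝ :=
  ∫ s, Set.indicator (Set.Ioc 0 t) (fun s => c (v (t - s) (ω (Set.projIcc 0 T hT s)))) s

def fkIntegrand (c : ℝ → ℝ) (g : E → ℝ) (v : ℝ → E → ℝ) (t : ℝ)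
    (ω : C(Set.Icc (0:ℝ) T, E)) : ℝ :=
  Real.exp (fkInner hT c v t ω) * g (ω (Set.projIcc 0 T hT t))

def fkPos (μ : E → Measure C(Set.Icc (0:ℝ) T, E)) (c : ℝ → ℝ) (g : E → ℝ)
    (v : ℝ → E → ℝ) (t : ℝ) (x : E) : ℝ :=
  ∫ ω, fkIntegrand hT c g v t ω ∂(μ x)

lemma measurable_eval' : Measurable fun p : ℝ × C(Set.Icc (0:ℝ) T, E) =>
    p.2 (Set.projIcc 0 T hT p.1) := by
  have h1 : Continuous fun p : ℝ × C(Set.Icc (0:ℝ) T, E) =>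
      ((p.2, Set.projIcc 0 T hT p.1) : C(Set.Icc (0:ℝ) T, E) × Set.Icc (0:ℝ) T) :=
    continuous_snd.prodMk (continuous_projIcc.comp continuous_fst)
  exact (ContinuousEval.continuous_eval.comp h1).measurable

lemma measurable_fkIntegrand {c : ℝ → ℝ} (hcm : Continuous c) {g : E → ℝ} (hgm : Measurable g)
    {v : ℝ → E → ℝ} (hv : Measurable (uncurry v)) :
    Measurable fun p : ℝ × C(Set.Icc (0:ℝ) T, E) => fkIntegrand hT c g v p.1 p.2 := by
  have hbase : Measurable fun q : (ℝ × C(Set.Icc (0:ℝ) T, E)) × ℝ =>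
      c (v (q.1.1 - q.2) (q.1.2 (Set.projIcc 0 T hT q.2))) := by
    have hev : Measurable fun q : (ℝ × C(Set.Icc (0:ℝ) T, E)) × ℝ =>
        q.1.2 (Set.projIcc 0 T hT q.2) :=
      (measurable_eval' hT).comp (measurable_snd.prodMk (measurable_snd.comp measurable_fst))
    have harg : Measurable fun q : (ℝ × C(Set.Icc (0:ℝ) T, E)) × ℝ =>
        ((q.1.1 - q.2, q.1.2 (Set.projIcc 0 T hT q.2)) : ℝ × E) :=
      ((measurable_fst.comp measurable_fst).sub measurable_snd).prodMk hev
    exact hcm.measurable.comp (hv.comp harg)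
  have hind : Measurable fun q : (ℝ × C(Set.Icc (0:ℝ) T, E)) × ℝ =>
      Set.indicator (Set.Ioc 0 q.1.1) (fun s => c (v (q.1.1 - s) (q.1.2 (Set.projIcc 0 T hT s)))) q.2 := by
    have hset : MeasurableSet {q : (ℝ × C(Set.Icc (0:ℝ) T, E)) × ℝ | q.2 ∈ Set.Ioc 0 q.1.1} := by
      have : {q : (ℝ × C(Set.Icc (0:ℝ) T, E)) × ℝ | q.2 ∈ Set.Ioc 0 q.1.1}
          = {q | (0:ℝ) < q.2} ∩ {q | q.2 ≤ q.1.1} := by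
        ext q; simp [Set.mem_Ioc, and_comm]
      rw [this]
      exact (measurableSet_lt measurable_const measurable_snd).inter
        (measurableSet_le measurable_snd (measurable_fst.comp measurable_fst))
    have : (fun q : (ℝ × C(Set.Icc (0:ℝ) T, E)) × ℝ =>
        Set.indicator (Set.Ioc 0 q.1.1) (fun s => c (v (q.1.1 - s) (q.1.2 (Set.projIcc 0 T hT s)))) q.2)
        = fun q => if q ∈ {q : (ℝ × C(Set.Icc (0:ℝ) T, E)) × ℝ | q.2 ∈ Set.Ioc 0 q.1.1}
            then c (v (q.1.1 - q.2) (q.1.2 (Set.projIcc 0 T hT q.2))) else 0 := by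
      ext q; simp [Set.indicator]
    rw [this]
    exact Measurable.ite hset hbase measurable_const
  have hK : Measurable fun p : ℝ × C(Set.Icc (0:ℝ) T, E) => fkInner hT c v p.1 p.2 := by
    have := (hind.stronglyMeasurable).integral_prod_right' (ν := (volume : Measure ℝ))
    exact this.measurable
  have hg2 : Measurable fun p : ℝ × C(Set.Icc (0:ℝ) T, E) => g (p.2 (Set.projIcc 0 T hT p.1)) :=
    hgm.comp (measurable_eval' hT)
  exact ((Real.measurable_exp.comp hK).mul hg2)

lemma measurable_fkPos {μ : E → Measure C(Set.Icc (0:ℝ) T, E)} (hμmeas : Measurable μ)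
    (hμ : ∀ x, IsProbabilityMeasure (μ x))
    {c : ℝ → ℝ} (hcm : Continuous c) {g : E → ℝ} (hgm : Measurable g)
    {v : ℝ → E → ℝ} (hv : Measurable (uncurry v)) :
    Measurable fun p : ℝ × E => fkPos hT μ c g v p.1 p.2 := by
  set κ₀ : Kernel E C(Set.Icc (0:ℝ) T, E) := ⟨μ, hμmeas⟩ with hκ₀
  have : IsMarkovKernel κ₀ := ⟨fun x => hμ x⟩
  set κ : Kernel (ℝ × E) C(Set.Icc (0:ℝ) T, E) := κ₀.comap Prod.snd measurable_snd with hκ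
  have : IsSFiniteKernel κ := by infer_instance
  have hf : StronglyMeasurable fun q : (ℝ × E) × C(Set.Icc (0:ℝ) T, E) =>
      fkIntegrand hT c g v q.1.1 q.2 :=
    ((measurable_fkIntegrand hT hcm hgm hv).comp
      ((measurable_fst.comp measurable_fst).prodMk measurable_snd)).stronglyMeasurable
  have := hf.integral_kernel_prod_right' (κ := κ)
  have h2 : (fun p : ℝ × E => fkPos hT μ c g v p.1 p.2)
      = fun p : ℝ × E => ∫ ω, fkIntegrand hT c g v p.1 ω ∂(κ p) := by
    ext p
    simp [fkPos, hκ, hκ₀, Kernel.comap_apply]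
  rw [h2]
  exact this.measurable

lemma fkPos_eq_feynmanKac {μ : E → Measure C(Set.Icc (0:ℝ) T, E)} (c : ℝ → ℝ) (g : E → ℝ)
    (v : ℝ → E → ℝ) {t : ℝ} (ht : 0 ≤ t) (x : E) :
    fkPos hT μ c g v t x = FeynmanKac hT μ c g v t x := by
  unfold fkPos FeynmanKac fkIntegrand fkInner
  congr 1
  ext ω
  rw [intervalIntegral.integral_of_le ht, ← integral_indicator measurableSet_Ioc]

lemma abs_exp_sub_exp_le {a b M : ℝ} (ha : a ≤ M) (hb : b ≤ M) :
    |Real.exp a - Real.exp b| ≤ Real.exp M * |a - b| := by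
  wlog hab : a ≤ b generalizing a b
  · rw [abs_sub_comm, abs_sub_comm a b]; exact this hb ha (le_of_not_ge hab)
  have h0 : Real.exp (b - a) * Real.exp (-(b - a)) = 1 := by
    rw [← Real.exp_add]; simp
  have h1 : Real.exp (b - a) - 1 ≤ (b - a) * Real.exp (b - a) := by
    nlinarith [Real.add_one_le_exp (-(b - a)), Real.exp_pos (b - a),
      mul_le_mul_of_nonneg_left (Real.add_one_le_exp (-(b - a))) (Real.exp_pos (b - a)).le]
  have h2 : Real.exp b - Real.exp a ≤ (b - a) * Real.exp b := by
    have h3 := mul_le_mul_of_nonneg_left h1 (Real.exp_pos a).le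
    have h4 : Real.exp a * Real.exp (b - a) = Real.exp b := by
      rw [← Real.exp_add]; ring_nf
    nlinarith [Real.exp_pos a]
  rw [abs_sub_comm a b, abs_of_nonpos (by linarith [Real.exp_le_exp.2 hab] :
      Real.exp a - Real.exp b ≤ 0), abs_of_nonneg (by linarith : (0:ℝ) ≤ b - a)]
  nlinarith [Real.exp_le_exp.2 hb, Real.exp_pos b]

lemma measurable_base {c : ℝ → ℝ} (hcm : Continuous c)
    {v : ℝ → E → ℝ} (hv : Measurable (uncurry v)) (t : ℝ) (ω : C(Set.Icc (0:ℝ) T, E)) :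
    Measurable fun s : ℝ => c (v (t - s) (ω (Set.projIcc 0 T hT s))) := by
  have harg : Measurable fun s : ℝ => ((t - s, ω (Set.projIcc 0 T hT s)) : ℝ × E) :=
    (measurable_const.sub measurable_id).prodMk
      ((ω.continuous.comp continuous_projIcc).measurable)
  exact hcm.measurable.comp (hv.comp harg)

lemma integrableOn_base {c : ℝ → ℝ} {c₀ : ℝ} (hc₀ : ∀ u : ℝ, 0 ≤ c u ∧ c u ≤ c₀)
    (hcm : Continuous c) {v : ℝ → E → ℝ} (hv : Measurable (uncurry v))
    (t : ℝ) (ω : C(Set.Icc (0:ℝ) T, E)) :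
    IntegrableOn (fun s : ℝ => c (v (t - s) (ω (Set.projIcc 0 T hT s)))) (Set.Ioc 0 t) := by
  haveI : IsFiniteMeasure ((volume : Measure ℝ).restrict (Set.Ioc 0 t)) :=
    ⟨by rw [Measure.restrict_apply_univ]; exact measure_Ioc_lt_top⟩
  refine Integrable.mono' (integrable_const c₀)
    ((measurable_base hT hcm hv t ω).aestronglyMeasurable) ?_
  filter_upwards with s
  rw [Real.norm_eq_abs, abs_of_nonneg (hc₀ _).1]
  exact (hc₀ _).2

lemma fkInner_mem {c : ℝ → ℝ} {c₀ : ℝ} (hc₀ : ∀ u : ℝ, 0 ≤ c u ∧ c u ≤ c₀)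
    (hcm : Continuous c) {v : ℝ → E → ℝ} (hv : Measurable (uncurry v))
    {t : ℝ} (ht : 0 ≤ t) (ω : C(Set.Icc (0:ℝ) T, E)) :
    0 ≤ fkInner hT c v t ω ∧ fkInner hT c v t ω ≤ c₀ * t := by
  have hrw : fkInner hT c v t ω
      = ∫ s in Set.Ioc 0 t, c (v (t - s) (ω (Set.projIcc 0 T hT s))) := by
    rw [fkInner, integral_indicator measurableSet_Ioc]
  constructor
  · rw [hrw]
    exact setIntegral_nonneg measurableSet_Ioc fun s _ => (hc₀ _).1
  · rw [hrw]
    calc ∫ s in Set.Ioc 0 t, c (v (t - s) (ω (Set.projIcc 0 T hT s)))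
        ≤ ∫ _s in Set.Ioc 0 t, c₀ := by
          refine setIntegral_mono_on (integrableOn_base hT hc₀ hcm hv t ω)
            (integrableOn_const measure_Ioc_lt_top.ne) measurableSet_Ioc
            fun s _ => (hc₀ _).2
      _ = c₀ * t := by
          simp [Real.volume_Ioc, ENNReal.toReal_ofReal ht, mul_comm, ht]

lemma integrable_fkIntegrand {μ : E → Measure C(Set.Icc (0:ℝ) T, E)}
    (hμ : ∀ x, IsProbabilityMeasure (μ x))
    {c : ℝ → ℝ} {c₀ : ℝ} (hc₀ : ∀ u : ℝ, 0 ≤ c u ∧ c u ≤ c₀) (hcm : Continuous c)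
    {g : E → ℝ} (hgm : Measurable g) {G : ℝ} (hG : ∀ x, |g x| ≤ G)
    {v : ℝ → E → ℝ} (hv : Measurable (uncurry v)) {t : ℝ} (ht : 0 ≤ t) (x : E) :
    Integrable (fun ω => fkIntegrand hT c g v t ω) (μ x) := by
  haveI := hμ x
  refine Integrable.mono' (integrable_const (Real.exp (c₀ * t) * G))
    (((measurable_fkIntegrand hT hcm hgm hv).comp
      (measurable_const.prodMk measurable_id)).aestronglyMeasurable) ?_
  filter_upwards with ω
  rw [Real.norm_eq_abs, fkIntegrand, abs_mul, Real.abs_exp]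
  exact mul_le_mul (Real.exp_le_exp.2 (fkInner_mem hT hc₀ hcm hv ht ω).2) (hG _)
    (abs_nonneg _) (Real.exp_pos _).le

lemma abs_fkPos_le {μ : E → Measure C(Set.Icc (0:ℝ) T, E)}
    (hμ : ∀ x, IsProbabilityMeasure (μ x))
    {c : ℝ → ℝ} {c₀ : ℝ} (hc₀ : ∀ u : ℝ, 0 ≤ c u ∧ c u ≤ c₀) (hcm : Continuous c)
    {g : E → ℝ} (hgm : Measurable g) {G : ℝ} (hG : ∀ x, |g x| ≤ G) (hG0 : 0 ≤ G)
    {v : ℝ → E → ℝ} (hv : Measurable (uncurry v)) {T₀ t : ℝ} (ht : t ∈ Set.Icc 0 T₀) (x : E) :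
    |fkPos hT μ c g v t x| ≤ G * Real.exp (c₀ * T₀) := by
  haveI := hμ x
  have hc₀0 : 0 ≤ c₀ := le_trans (hc₀ 0).1 (hc₀ 0).2
  have h1 : ‖∫ ω, fkIntegrand hT c g v t ω ∂(μ x)‖
      ≤ Real.exp (c₀ * t) * G * ((μ x) Set.univ).toReal := by
    refine norm_integral_le_of_norm_le_const ?_
    filter_upwards with ω
    rw [Real.norm_eq_abs, fkIntegrand, abs_mul, Real.abs_exp]
    exact mul_le_mul (Real.exp_le_exp.2 (fkInner_mem hT hc₀ hcm hv ht.1 ω).2) (hG _)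
      (abs_nonneg _) (Real.exp_pos _).le
  rw [measure_univ, ENNReal.toReal_one, mul_one] at h1
  calc |fkPos hT μ c g v t x| ≤ Real.exp (c₀ * t) * G := h1
    _ ≤ Real.exp (c₀ * T₀) * G := by
        exact mul_le_mul_of_nonneg_right
          (Real.exp_le_exp.2 (mul_le_mul_of_nonneg_left ht.2 hc₀0)) hG0
    _ = G * Real.exp (c₀ * T₀) := by ring

lemma fkPos_contraction {μ : E → Measure C(Set.Icc (0:ℝ) T, E)}
    (hμ : ∀ x, IsProbabilityMeasure (μ x))
    {c : ℝ → ℝ} {Lc : NNReal} (hc : LipschitzWith Lc c)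
    {c₀ : ℝ} (hc₀ : ∀ u : ℝ, 0 ≤ c u ∧ c u ≤ c₀)
    {g : E → ℝ} (hgm : Measurable g) {G : ℝ} (hG : ∀ x, |g x| ≤ G) (hG0 : 0 ≤ G)
    {v w : ℝ → E → ℝ} (hv : Measurable (uncurry v)) (hw : Measurable (uncurry w))
    {T₀ D : ℝ} (hD0 : 0 ≤ D)
    (hvw : ∀ s ∈ Set.Icc (0:ℝ) T₀, ∀ y, |v s y - w s y| ≤ D)
    {t : ℝ} (ht : t ∈ Set.Icc (0:ℝ) T₀) (x : E) :
    |fkPos hT μ c g v t x - fkPos hT μ c g w t x|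
      ≤ G * Real.exp (c₀ * T₀) * Lc * T₀ * D := by
  haveI := hμ x
  have hcm : Continuous c := hc.continuous
  have hc₀0 : 0 ≤ c₀ := le_trans (hc₀ 0).1 (hc₀ 0).2
  have hT₀0 : 0 ≤ T₀ := le_trans ht.1 ht.2
  -- inner estimate
  have hinner : ∀ ω : C(Set.Icc (0:ℝ) T, E),
      |fkInner hT c v t ω - fkInner hT c w t ω| ≤ Lc * D * T₀ := by
    intro ω
    have hiv := integrableOn_base hT hc₀ hcm hv t ω
    have hiw := integrableOn_base hT hc₀ hcm hw t ω
    have hrw : fkInner hT c v t ω - fkInner hT c w t ω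
        = ∫ s in Set.Ioc 0 t, (c (v (t - s) (ω (Set.projIcc 0 T hT s)))
            - c (w (t - s) (ω (Set.projIcc 0 T hT s)))) := by
      rw [fkInner, fkInner, integral_indicator measurableSet_Ioc,
        integral_indicator measurableSet_Ioc, ← integral_sub hiv hiw]
    rw [hrw]
    calc |∫ s in Set.Ioc 0 t, (c (v (t - s) (ω (Set.projIcc 0 T hT s)))
            - c (w (t - s) (ω (Set.projIcc 0 T hT s))))|
        ≤ ∫ s in Set.Ioc 0 t, |c (v (t - s) (ω (Set.projIcc 0 T hT s)))
            - c (w (t - s) (ω (Set.projIcc 0 T hT s)))| := by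
            simpa [Real.norm_eq_abs] using norm_integral_le_integral_norm
              (μ := (volume : Measure ℝ).restrict (Set.Ioc 0 t))
              (fun s => c (v (t - s) (ω (Set.projIcc 0 T hT s)))
                - c (w (t - s) (ω (Set.projIcc 0 T hT s))))
      _ ≤ ∫ _s in Set.Ioc 0 t, (Lc : ℝ) * D := by
          refine setIntegral_mono_on ((hiv.sub hiw).abs)
            (integrableOn_const measure_Ioc_lt_top.ne) measurableSet_Ioc ?_
          intro s hs
          have hts : t - s ∈ Set.Icc (0:ℝ) T₀ :=
            ⟨by linarith [hs.2], by linarith [hs.1, ht.2]⟩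
          have hlip := hc.dist_le_mul (v (t - s) (ω (Set.projIcc 0 T hT s)))
            (w (t - s) (ω (Set.projIcc 0 T hT s)))
          rw [Real.dist_eq, Real.dist_eq] at hlip
          exact le_trans hlip (mul_le_mul_of_nonneg_left
            (hvw _ hts _) Lc.coe_nonneg)
      _ = (Lc : ℝ) * D * t := by
          simp [Real.volume_Ioc, ENNReal.toReal_ofReal ht.1, mul_comm, max_eq_left ht.1]
      _ ≤ (Lc : ℝ) * D * T₀ :=
          mul_le_mul_of_nonneg_left ht.2 (mul_nonneg Lc.coe_nonneg hD0)
  -- pointwise estimate on integrand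
  have hpt : ∀ ω : C(Set.Icc (0:ℝ) T, E),
      ‖fkIntegrand hT c g v t ω - fkIntegrand hT c g w t ω‖
        ≤ G * Real.exp (c₀ * T₀) * Lc * T₀ * D := by
    intro ω
    have hA := fkInner_mem hT hc₀ hcm hv ht.1 ω
    have hB := fkInner_mem hT hc₀ hcm hw ht.1 ω
    have hAM : fkInner hT c v t ω ≤ c₀ * T₀ :=
      le_trans hA.2 (mul_le_mul_of_nonneg_left ht.2 hc₀0)
    have hBM : fkInner hT c w t ω ≤ c₀ * T₀ :=
      le_trans hB.2 (mul_le_mul_of_nonneg_left ht.2 hc₀0)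
    have hexp := abs_exp_sub_exp_le hAM hBM
    rw [Real.norm_eq_abs, fkIntegrand, fkIntegrand, ← sub_mul, abs_mul]
    calc |Real.exp (fkInner hT c v t ω) - Real.exp (fkInner hT c w t ω)|
          * |g (ω (Set.projIcc 0 T hT t))|
        ≤ (Real.exp (c₀ * T₀) * ((Lc : ℝ) * D * T₀)) * G := by
          refine mul_le_mul (le_trans hexp ?_) (hG _) (abs_nonneg _) ?_
          · exact mul_le_mul_of_nonneg_left (hinner ω) (Real.exp_pos _).le
          · positivity
      _ = G * Real.exp (c₀ * T₀) * Lc * T₀ * D := by ring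
  -- conclude
  have hintv := integrable_fkIntegrand hT hμ hc₀ hcm hgm hG hv ht.1 x
  have hintw := integrable_fkIntegrand hT hμ hc₀ hcm hgm hG hw ht.1 x
  have hsub : fkPos hT μ c g v t x - fkPos hT μ c g w t x
      = ∫ ω, (fkIntegrand hT c g v t ω - fkIntegrand hT c g w t ω) ∂(μ x) :=
    (integral_sub hintv hintw).symm
  rw [hsub]
  have := norm_integral_le_of_norm_le_const (μ := μ x)
    (f := fun ω => fkIntegrand hT c g v t ω - fkIntegrand hT c g w t ω)
    (C := G * Real.exp (c₀ * T₀) * Lc * T₀ * D) (Filter.Eventually.of_forall hpt)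
  rwa [probReal_univ, mul_one, Real.norm_eq_abs] at this

end
/-- If `‖g‖ · Lip(c) · T₀ · e^{c₀T₀} < 1`, there is a unique bounded measurable solution of the
integral equation `u = F[u]` on `[0,T₀] × E`, and it satisfies `|u| ≤ ‖g‖ e^{c₀T₀}`. -/

theorem feynmanKac_fixed_point
    {E : Type*} [MetricSpace E] [PolishSpace E] [MeasurableSpace E] [BorelSpace E]
    {T : ℝ} (hT : 0 < T)
    [MeasurableSpace C(Set.Icc (0:ℝ) T, E)] [BorelSpace C(Set.Icc (0:ℝ) T, E)]
    (μ : E → Measure C(Set.Icc (0:ℝ) T, E)) (hμmeas : Measurable μ)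
    (hμ : ∀ x, IsProbabilityMeasure (μ x))
    (c : ℝ → ℝ) (Lc : NNReal) (hc : LipschitzWith Lc c)
    (c₀ : ℝ) (hc₀ : ∀ u : ℝ, 0 ≤ c u ∧ c u ≤ c₀)
    (g : E → ℝ) (hgm : Measurable g) (G : ℝ) (hG : ∀ x, |g x| ≤ G)
    (T₀ : ℝ) (hT₀ : 0 < T₀) (hT₀T : T₀ ≤ T)
    (hcontr : G * (Lc : ℝ) * T₀ * Real.exp (c₀ * T₀) < 1) :
    ∃ u : ℝ → E → ℝ,
      (Measurable (Function.uncurry u) ∧ (∃ C : ℝ, ∀ s y, |u s y| ≤ C) ∧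
        (∀ t ∈ Set.Icc (0:ℝ) T₀, ∀ x : E, u t x = FeynmanKac hT.le μ c g u t x) ∧
        (∀ t ∈ Set.Icc (0:ℝ) T₀, ∀ x : E, |u t x| ≤ G * Real.exp (c₀ * T₀))) ∧
      (∀ u' : ℝ → E → ℝ, Measurable (Function.uncurry u') → (∃ C : ℝ, ∀ s y, |u' s y| ≤ C) →
        (∀ t ∈ Set.Icc (0:ℝ) T₀, ∀ x : E, u' t x = FeynmanKac hT.le μ c g u' t x) →
        ∀ t ∈ Set.Icc (0:ℝ) T₀, ∀ x : E, u' t x = u t x) := by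
  rcases isEmpty_or_nonempty E with hE | hE
  · refine ⟨fun _ _ => 0, ⟨measurable_const, ⟨0, fun s y => by simp⟩,
      fun t ht x => (IsEmpty.false x).elim, fun t ht x => (IsEmpty.false x).elim⟩,
      fun u' _ _ _ t ht x => (IsEmpty.false x).elim⟩
  obtain ⟨x₀⟩ := hE
  have hcm : Continuous c := hc.continuous
  have hG0 : 0 ≤ G := le_trans (abs_nonneg _) (hG x₀)
  have hc₀0 : 0 ≤ c₀ := le_trans (hc₀ 0).1 (hc₀ 0).2
  set M : ℝ := G * Real.exp (c₀ * T₀) with hM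
  have hM0 : 0 ≤ M := by positivity
  set q : ℝ := G * Real.exp (c₀ * T₀) * (Lc : ℝ) * T₀ with hq
  have hq0 : 0 ≤ q := by positivity
  have hq1 : q < 1 := by
    calc q = G * (Lc : ℝ) * T₀ * Real.exp (c₀ * T₀) := by rw [hq]; ring
      _ < 1 := hcontr
  set Φ : (ℝ → E → ℝ) → ℝ → E → ℝ :=
    fun w t x => if t ∈ Set.Icc (0:ℝ) T₀ then fkPos hT.le μ c g w t x else 0 with hΦ
  set v : ℕ → ℝ → E → ℝ := fun n => Φ^[n] (fun _ _ => 0) with hvdef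
  have hvsucc : ∀ n, v (n + 1) = Φ (v n) := fun n => Function.iterate_succ_apply' Φ n _
  have hmeas : ∀ n, Measurable (uncurry (v n)) := by
    intro n
    induction n with
    | zero => exact measurable_const
    | succ n ih =>
      rw [hvsucc n]
      have hset : MeasurableSet {p : ℝ × E | p.1 ∈ Set.Icc (0:ℝ) T₀} :=
        measurable_fst measurableSet_Icc
      have : uncurry (Φ (v n)) = fun p : ℝ × E =>
          if p ∈ {p : ℝ × E | p.1 ∈ Set.Icc (0:ℝ) T₀}
          then fkPos hT.le μ c g (v n) p.1 p.2 else 0 := rfl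
      rw [this]
      exact Measurable.ite hset (measurable_fkPos hT.le hμmeas hμ hcm hgm ih) measurable_const
  have hbound : ∀ n s y, |v n s y| ≤ M := by
    intro n
    induction n with
    | zero => intro s y; simpa [hvdef] using hM0
    | succ n ih =>
      intro s y
      rw [hvsucc n]
      by_cases hs : s ∈ Set.Icc (0:ℝ) T₀
      · simp only [hΦ, if_pos hs]
        exact abs_fkPos_le hT.le hμ hc₀ hcm hgm hG hG0 (hmeas n) hs y
      · simp only [hΦ]
        rw [if_neg hs]
        simpa using hM0
  have hdiff : ∀ n s y, dist (v n s y) (v (n + 1) s y) ≤ (2 * M) * q ^ n := by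
    intro n
    induction n with
    | zero =>
      intro s y
      rw [Real.dist_eq]
      have h0 : v 0 s y = 0 := rfl
      calc |v 0 s y - v 1 s y| = |v 1 s y| := by rw [h0, zero_sub, abs_neg]
        _ ≤ M := hbound 1 s y
        _ ≤ (2 * M) * q ^ 0 := by simp; linarith
    | succ n ih =>
      intro s y
      by_cases hs : s ∈ Set.Icc (0:ℝ) T₀
      · have e1 : v (n + 1) s y = fkPos hT.le μ c g (v n) s y := by
          rw [hvsucc n]; simp only [hΦ, if_pos hs]
        have e2 : v (n + 2) s y = fkPos hT.le μ c g (v (n + 1)) s y := by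
          rw [hvsucc (n + 1)]; simp only [hΦ, if_pos hs]
        rw [Real.dist_eq, e1, e2]
        have hvw : ∀ s' ∈ Set.Icc (0:ℝ) T₀, ∀ y',
            |v n s' y' - v (n + 1) s' y'| ≤ (2 * M) * q ^ n := by
          intro s' _ y'
          have := ih s' y'; rwa [Real.dist_eq] at this
        have := fkPos_contraction hT.le hμ hc hc₀ hgm hG hG0 (hmeas n) (hmeas (n + 1))
          (by positivity) hvw hs y
        calc |fkPos hT.le μ c g (v n) s y - fkPos hT.le μ c g (v (n + 1)) s y|
            ≤ G * Real.exp (c₀ * T₀) * (Lc : ℝ) * T₀ * ((2 * M) * q ^ n) := this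
          _ = (2 * M) * q ^ (n + 1) := by rw [hq]; ring
      · have e1 : v (n + 1) s y = 0 := by
          rw [hvsucc n]; simp only [hΦ]; rw [if_neg hs]
        have e2 : v (n + 2) s y = 0 := by
          rw [hvsucc (n + 1)]; simp only [hΦ]; rw [if_neg hs]
        rw [e1, e2]
        simp only [dist_self]
        positivity
  have hcauchy : ∀ (t : ℝ) (x : E), CauchySeq fun n => v n t x := fun t x =>
    cauchySeq_of_le_geometric q (2 * M) hq1 (fun n => hdiff n t x)
  set u : ℝ → E → ℝ := fun t x => limUnder atTop fun n => v n t x with hu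
  have htend : ∀ t x, Tendsto (fun n => v n t x) atTop (nhds (u t x)) := fun t x =>
    (hcauchy t x).tendsto_limUnder
  have humeas : Measurable (uncurry u) :=
    measurable_of_tendsto_metrizable (fun n => hmeas n)
      (tendsto_pi_nhds.mpr fun p => htend p.1 p.2)
  have hubound : ∀ s y, |u s y| ≤ M := by
    intro s y
    have habs : Tendsto (fun n => |v n s y|) atTop (nhds |u s y|) := (htend s y).abs
    exact le_of_tendsto' habs fun n => hbound n s y
  have hrate : ∀ n s y, |v n s y - u s y| ≤ (2 * M) * q ^ n / (1 - q) := by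
    intro n s y
    have := dist_le_of_le_geometric_of_tendsto q (2 * M) hq1
      (fun k => hdiff k s y) (htend s y) n
    rwa [Real.dist_eq] at this
  have hfix : ∀ t ∈ Set.Icc (0:ℝ) T₀, ∀ x : E, u t x = fkPos hT.le μ c g u t x := by
    intro t ht x
    have h1 : Tendsto (fun n => v (n + 1) t x) atTop (nhds (u t x)) :=
      (htend t x).comp (tendsto_add_atTop_nat 1)
    have h2 : ∀ n, v (n + 1) t x = fkPos hT.le μ c g (v n) t x := fun n => by
      rw [hvsucc n]; simp only [hΦ, if_pos ht]
    have hDn0 : ∀ n : ℕ, (0:ℝ) ≤ (2 * M) * q ^ n / (1 - q) := fun n =>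
      div_nonneg (by positivity) (by linarith)
    have hest : ∀ n, dist (fkPos hT.le μ c g (v n) t x) (fkPos hT.le μ c g u t x)
        ≤ (G * Real.exp (c₀ * T₀) * (Lc : ℝ) * T₀ * (2 * M) / (1 - q)) * q ^ n := by
      intro n
      rw [Real.dist_eq]
      have := fkPos_contraction hT.le hμ hc hc₀ hgm hG hG0 (hmeas n) humeas
        (hDn0 n) (fun s' _ y' => hrate n s' y') ht x
      calc |fkPos hT.le μ c g (v n) t x - fkPos hT.le μ c g u t x|
          ≤ G * Real.exp (c₀ * T₀) * (Lc : ℝ) * T₀ * ((2 * M) * q ^ n / (1 - q)) := this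
        _ = (G * Real.exp (c₀ * T₀) * (Lc : ℝ) * T₀ * (2 * M) / (1 - q)) * q ^ n := by
            ring
    have hlim0 : Tendsto (fun n : ℕ =>
        (G * Real.exp (c₀ * T₀) * (Lc : ℝ) * T₀ * (2 * M) / (1 - q)) * q ^ n)
        atTop (nhds 0) := by
      simpa using (tendsto_pow_atTop_nhds_zero_of_lt_one hq0 hq1).const_mul
        (G * Real.exp (c₀ * T₀) * (Lc : ℝ) * T₀ * (2 * M) / (1 - q))
    have h3 : Tendsto (fun n => fkPos hT.le μ c g (v n) t x) atTop
        (nhds (fkPos hT.le μ c g u t x)) := by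
      refine tendsto_iff_dist_tendsto_zero.2 ?_
      exact squeeze_zero (fun n => dist_nonneg) hest hlim0
    have h1' : Tendsto (fun n => fkPos hT.le μ c g (v n) t x) atTop (nhds (u t x)) := by
      have : (fun n => v (n + 1) t x) = fun n => fkPos hT.le μ c g (v n) t x :=
        funext h2
      rwa [this] at h1
    exact tendsto_nhds_unique h1' h3
  refine ⟨u, ⟨humeas, ⟨M, hubound⟩, ?_, fun t ht x => hubound t x⟩, ?_⟩
  · intro t ht x
    rw [hfix t ht x, fkPos_eq_feynmanKac hT.le c g u ht.1 x]
  · intro u' humeas' hCu' heq' t ht x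
    obtain ⟨C', hC'⟩ := hCu'
    have hC'0 : 0 ≤ C' := le_trans (abs_nonneg _) (hC' 0 x₀)
    have heq'' : ∀ t ∈ Set.Icc (0:ℝ) T₀, ∀ x : E, u' t x = fkPos hT.le μ c g u' t x := by
      intro t ht x
      rw [heq' t ht x, fkPos_eq_feynmanKac hT.le c g u' ht.1 x]
    have key : ∀ n : ℕ, ∀ t ∈ Set.Icc (0:ℝ) T₀, ∀ x : E,
        |u' t x - u t x| ≤ (C' + M) * q ^ n := by
      intro n
      induction n with
      | zero =>
        intro t ht x
        calc |u' t x - u t x| ≤ |u' t x| + |u t x| := abs_sub _ _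
          _ ≤ C' + M := add_le_add (hC' t x) (hubound t x)
          _ = (C' + M) * q ^ 0 := by simp
      | succ n ih =>
        intro t ht x
        rw [heq'' t ht x, hfix t ht x]
        have := fkPos_contraction hT.le hμ hc hc₀ hgm hG hG0 humeas' humeas
          (by positivity) (fun s' hs' y' => ih s' hs' y') ht x
        calc |fkPos hT.le μ c g u' t x - fkPos hT.le μ c g u t x|
            ≤ G * Real.exp (c₀ * T₀) * (Lc : ℝ) * T₀ * ((C' + M) * q ^ n) := this
          _ = (C' + M) * q ^ (n + 1) := by rw [hq]; ring
    have hd0 : |u' t x - u t x| ≤ 0 := by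
      have hlim : Tendsto (fun n : ℕ => (C' + M) * q ^ n) atTop (nhds 0) := by
        simpa using (tendsto_pow_atTop_nhds_zero_of_lt_one hq0 hq1).const_mul (C' + M)
      exact le_of_tendsto_of_tendsto' tendsto_const_nhds hlim
        (fun n => key n t ht x)
    have := abs_nonpos_iff.1 hd0
    linarith [sub_eq_zero.1 this]
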